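/- For a > 1 and n ≥ 1, the last entry of the solution x of T x = e_n, where T is the n×n tridiagonal matrix with diagonal 2a and off-diagonals -1 and e_n the n-th standard basis vector, equals U_{n-1}(a)/U_n(a), where U_k denotes the Chebyshev polynomial of the second kind. -/

import Mathlib

open Matrix Polynomial

/-- the last entry of the solution of `T x = e_n` for the `n × n`
tridiagonal matrix with diagonal `2a` and off-diagonals `-1` equals
`U_{n-1}(a)/U_n(a)` (here `n = m + 1`). -/
theorem stmt_11 (a : ℝ) (ha : 1 < a) (m : ℕ)
    (T : Matrix (Fin (m + 1)) (Fin (m + 1)) ℝ)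
    (hT : ∀ i j : Fin (m + 1), T i j =
      if i = j then 2 * a
      else if (i : ℕ) + 1 = (j : ℕ) ∨ (j : ℕ) + 1 = (i : ℕ) then -1 else 0)
    (x : Fin (m + 1) → ℝ)
    (hx : T *ᵥ x = Pi.single (Fin.last m) 1) :
    x (Fin.last m) = (Polynomial.Chebyshev.U ℝ (m : ℤ)).eval a /
      (Polynomial.Chebyshev.U ℝ ((m : ℤ) + 1)).eval a := by
  set u : ℕ → ℝ := fun k => (Chebyshev.U ℝ (k : ℤ)).eval a with hu
  have u0 : u 0 = 1 := by simp [hu]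
  have u1 : u 1 = 2 * a := by simp [hu, Chebyshev.U_one]
  have urec : ∀ k : ℕ, u (k + 2) = 2 * a * u (k + 1) - u k := by
    intro k
    have : ((k : ℤ) + 2) = ((k + 2 : ℕ) : ℤ) := by push_cast; ring
    simp only [hu]
    rw [← this, Chebyshev.U_add_two]
    push_cast
    simp [mul_assoc]
  have upos : ∀ k : ℕ, 0 < u k ∧ u k < u (k + 1) := by
    intro k
    induction k with
    | zero => constructor <;> [simp [u0]; nlinarith [u0, u1]]
    | succ n ih =>
      have h2 := urec n
      constructor
      · linarith [ih.1, ih.2]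
      · nlinarith [ih.1, ih.2]
  -- row equations
  have hrow : ∀ i : Fin (m + 1),
      2 * a * x i
      - (if h : (i : ℕ) < m then x ⟨(i : ℕ) + 1, by omega⟩ else 0)
      - (if h : 0 < (i : ℕ) then x ⟨(i : ℕ) - 1, by omega⟩ else 0)
      = (if (i : ℕ) = m then 1 else 0) := by
    intro i
    have h := congrFun hx i
    rw [mulVec, dotProduct] at h
    have hsum : ∀ j : Fin (m + 1), T i j * x j =
        (if i = j then 2 * a * x j else 0)
        + (if ((i : ℕ) + 1 = (j : ℕ)) then -x j else 0)
        + (if ((j : ℕ) + 1 = (i : ℕ)) then -x j else 0) := by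
      intro j
      rw [hT]
      rcases eq_or_ne i j with rfl | hij
      · simp
      · have hv : (i : ℕ) ≠ (j : ℕ) := fun hh => hij (Fin.ext hh)
        rw [if_neg hij, if_neg hij]
        by_cases h2 : (i : ℕ) + 1 = (j : ℕ)
        · have h3 : ¬((j : ℕ) + 1 = (i : ℕ)) := by omega
          simp only [if_pos (Or.inl h2), if_pos h2, if_neg h3]
          ring
        · by_cases h3 : (j : ℕ) + 1 = (i : ℕ)
          · simp only [if_pos (Or.inr h3), if_neg h2, if_pos h3]
            ring
          · simp only [if_neg (by tauto : ¬((i:ℕ)+1 = (j:ℕ) ∨ (j:ℕ)+1 = (i:ℕ))), if_neg h2, if_neg h3]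
            ring
    rw [Finset.sum_congr rfl (fun j _ => hsum j)] at h
    rw [Finset.sum_add_distrib, Finset.sum_add_distrib] at h
    have s1 : ∑ j : Fin (m + 1), (if i = j then 2 * a * x j else 0) = 2 * a * x i := by
      simp [Finset.sum_ite_eq]
    have s2 : ∑ j : Fin (m + 1), (if ((i : ℕ) + 1 = (j : ℕ)) then -x j else 0)
        = (if h : (i : ℕ) < m then -x ⟨(i : ℕ) + 1, by omega⟩ else 0) := by
      split_ifs with hi
      · have : ∀ j : Fin (m + 1), ((i : ℕ) + 1 = (j : ℕ)) ↔ (⟨(i : ℕ) + 1, by omega⟩ : Fin (m+1)) = j := by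
          intro j; rw [Fin.ext_iff]
        rw [Finset.sum_congr rfl (fun j _ => by rw [if_congr (this j) rfl rfl])]
        simp [Finset.sum_ite_eq]
      · apply Finset.sum_eq_zero
        intro j _
        rw [if_neg]
        omega
    have s3 : ∑ j : Fin (m + 1), (if ((j : ℕ) + 1 = (i : ℕ)) then -x j else 0)
        = (if h : 0 < (i : ℕ) then -x ⟨(i : ℕ) - 1, by omega⟩ else 0) := by
      split_ifs with hi
      · have : ∀ j : Fin (m + 1), ((j : ℕ) + 1 = (i : ℕ)) ↔ (⟨(i : ℕ) - 1, by omega⟩ : Fin (m+1)) = j := by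
          intro j; rw [Fin.ext_iff]; simp; omega
        rw [Finset.sum_congr rfl (fun j _ => by rw [if_congr (this j) rfl rfl])]
        simp [Finset.sum_ite_eq]
      · apply Finset.sum_eq_zero
        intro j _
        rw [if_neg]
        omega
    rw [s1, s2, s3] at h
    have hr : (Pi.single (Fin.last m) 1 : Fin (m+1) → ℝ) i = (if (i : ℕ) = m then 1 else 0) := by
      rw [Pi.single_apply]
      simp only [Fin.ext_iff, Fin.val_last]
    rw [hr] at h
    split_ifs with h1 h2 h2 <;> split_ifs at h <;> linarith
  -- x k = u k * x 0
  have key : ∀ k, ∀ hk : k ≤ m, x ⟨k, by omega⟩ = u k * x ⟨0, by omega⟩ := by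
    intro k
    induction k using Nat.strong_induction_on with
    | _ k ih =>
      match k with
      | 0 => intro _; simp [u0]
      | 1 =>
        intro hk
        have h0 := hrow ⟨0, by omega⟩
        simp only [Fin.val_mk] at h0
        rw [dif_pos (by omega : (0:ℕ) < m), dif_neg (by omega), if_neg (by omega)] at h0
        rw [u1]
        linarith
      | (j + 2) =>
        intro hk
        have h1 := hrow ⟨j + 1, by omega⟩
        simp only [Fin.val_mk] at h1
        rw [dif_pos (by omega : j + 1 < m), dif_pos (by omega), if_neg (by omega)] at h1
        have e1 := ih (j + 1) (by omega) (by omega)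
        have e0 := ih j (by omega) (by omega)
        have h1' : 2 * a * x ⟨j + 1, by omega⟩ - x ⟨j + 2, by omega⟩ - x ⟨j, by omega⟩ = 0 := h1
        rw [e1, e0] at h1'
        rw [urec j]
        linarith
  have hlast := hrow (Fin.last m)
  simp only [Fin.val_last, eq_self_iff_true, if_true] at hlast
  rw [dif_neg (by omega)] at hlast
  have hxm : x (Fin.last m) = u m * x ⟨0, by omega⟩ := by
    have := key m le_rfl
    convert this using 2
    rfl
  have hx0 : u (m + 1) * x ⟨0, by omega⟩ = 1 := by
    rcases Nat.eq_zero_or_pos m with hm | hm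
    · subst hm
      rw [dif_neg (by omega)] at hlast
      rw [u1]
      rw [hxm, u0] at hlast
      linarith
    · rw [dif_pos hm] at hlast
      have hn : x ⟨m - 1, by omega⟩ = u (m - 1) * x ⟨0, by omega⟩ := key (m - 1) (by omega)
      have hu2 := urec (m - 1)
      rw [show m - 1 + 2 = m + 1 by omega, show m - 1 + 1 = m by omega] at hu2
      rw [hxm, hn] at hlast
      rw [hu2]
      linear_combination hlast
  have hune : u (m + 1) ≠ 0 := ne_of_gt (upos (m + 1)).1
  have hx0' : x ⟨0, by omega⟩ = 1 / u (m + 1) := by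
    rw [eq_div_iff hune]
    linear_combination hx0
  rw [hxm, hx0']
  have : ((m : ℤ) + 1) = ((m + 1 : ℕ) : ℤ) := by push_cast; ring
  rw [this]
  simp only [hu]
  ring
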